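/- Let H be a free ℤ-module with an alternating ℤ-bilinear form ω : H × H → ℤ. Let A, B, C be submodules, with B = B^⊥ where S^⊥ = {x ∈ H : ω(s, x) = 0 for all s ∈ S}. Let α₁, …, α_g generate A, β₁, …, β_g generate B, and γ₁, …, γ_g generate C, and define the g × g integer matrices (_αQ_β)ᵢⱼ = ω(αᵢ, βⱼ), (_βQ_α)ᵢⱼ = ω(βᵢ, αⱼ), (_αQ_γ)ᵢⱼ = ω(αᵢ, γⱼ), (_βQ_γ)ᵢⱼ = ω(βᵢ, γⱼ), and (_γQ_β)ᵢⱼ = ω(γᵢ, βⱼ). Assume det(_βQ_α) is a unit in ℤ. Then for all v, w ∈ ℤ^g, setting x = Σᵢ vᵢ γᵢ, y = Σⱼ wⱼ γⱼ, s = (_βQ_α)⁻¹ (_βQ_γ) v, and x′ = Σᵢ sᵢ αᵢ, one has: x′ ∈ A, x − x′ ∈ B, and ω(x′, y) = vᵀ · (_γQ_β)(_αQ_β)⁻¹(_αQ_γ) · w. -/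

import Mathlib

private lemma zsmul_left' {H : Type*} [AddCommGroup H] [Module ℤ H]
    (ω : LinearMap.BilinForm ℤ H) (n : ℤ) (x y : H) : ω (n • x) y = n * ω x y := by
  have h1 : ω (n • x) = n • ω x := map_zsmul ω n x
  calc ω (n • x) y = (n • ω x) y := by rw [h1]
    _ = n • (ω x y) := rfl
    _ = n * ω x y := zsmul_eq_mul _ _

private lemma zsmul_right' {H : Type*} [AddCommGroup H] [Module ℤ H]
    (ω : LinearMap.BilinForm ℤ H) (n : ℤ) (x y : H) : ω x (n • y) = n * ω x y := by
  calc ω x (n • y) = n • ω x y := map_zsmul (ω x) n y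
    _ = n * ω x y := zsmul_eq_mul _ _

private lemma bsum_right' {H : Type*} [AddCommGroup H] [Module ℤ H]
    (ω : LinearMap.BilinForm ℤ H) {g : ℕ} (b : H) (γ : Fin g → H) (v : Fin g → ℤ) :
    ω b (∑ j, v j • γ j) = ∑ j, v j * ω b (γ j) := by
  rw [map_sum]
  exact Finset.sum_congr rfl fun j _ => zsmul_right' ω (v j) b (γ j)

private lemma bsum_both' {H : Type*} [AddCommGroup H] [Module ℤ H]
    (ω : LinearMap.BilinForm ℤ H) {g : ℕ} (α γ : Fin g → H)
    (Q : Matrix (Fin g) (Fin g) ℤ) (hQ : ∀ i j, Q i j = ω (α i) (γ j))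
    (s w : Fin g → ℤ) :
    ω (∑ i, s i • α i) (∑ j, w j • γ j) = dotProduct s (Q.mulVec w) := by
  have h0 : ω (∑ i, s i • α i) (∑ j, w j • γ j)
      = ∑ i, ω (s i • α i) (∑ j, w j • γ j) := by
    rw [map_sum ω _ Finset.univ, LinearMap.sum_apply]
  rw [h0]
  simp only [dotProduct, Matrix.mulVec]
  refine Finset.sum_congr rfl fun i _ => ?_
  rw [zsmul_left', bsum_right', Finset.mul_sum, Finset.mul_sum]
  exact Finset.sum_congr rfl fun j _ => by rw [hQ]; ring

/-- Proposition `LovelyProduct`: with `B = B^⊥`, generators `α`, `β`, `γ`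
of `A`, `B`, `C`, intersection matrices as indicated, and `det(_βQ_α)` a unit, for all
`v, w ∈ ℤ^g`, setting `x = Σ vᵢγᵢ`, `y = Σ wⱼγⱼ`, `s = (_βQ_α)⁻¹(_βQ_γ)v`, and
`x′ = Σ sᵢαᵢ`, one has `x′ ∈ A`, `x − x′ ∈ B`, and
`ω(x′,y) = vᵀ·(_γQ_β)(_αQ_β)⁻¹(_αQ_γ)·w`. -/
theorem stmt_11 (H : Type*) [AddCommGroup H] [Module ℤ H] [Module.Free ℤ H] (g : ℕ)
    (ω : LinearMap.BilinForm ℤ H) (halt : ∀ x : H, ω x x = 0)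
    (A B C : Submodule ℤ H)
    (hB : ∀ x : H, x ∈ B ↔ ∀ b ∈ B, ω b x = 0)
    (α β γ : Fin g → H)
    (hαA : A = Submodule.span ℤ (Set.range α))
    (hβB : B = Submodule.span ℤ (Set.range β))
    (hγC : C = Submodule.span ℤ (Set.range γ))
    (Qαβ Qβα Qαγ Qβγ Qγβ : Matrix (Fin g) (Fin g) ℤ)
    (hQαβ : ∀ i j, Qαβ i j = ω (α i) (β j))
    (hQβα : ∀ i j, Qβα i j = ω (β i) (α j))
    (hQαγ : ∀ i j, Qαγ i j = ω (α i) (γ j))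
    (hQβγ : ∀ i j, Qβγ i j = ω (β i) (γ j))
    (hQγβ : ∀ i j, Qγβ i j = ω (γ i) (β j))
    (hdet : IsUnit Qβα.det) :
    ∀ v w : Fin g → ℤ,
      (∑ i, (Qβα⁻¹.mulVec (Qβγ.mulVec v)) i • α i) ∈ A ∧
      (∑ i, v i • γ i) - (∑ i, (Qβα⁻¹.mulVec (Qβγ.mulVec v)) i • α i) ∈ B ∧
      ω (∑ i, (Qβα⁻¹.mulVec (Qβγ.mulVec v)) i • α i) (∑ j, w j • γ j) =
        dotProduct v ((Qγβ * Qαβ⁻¹ * Qαγ).mulVec w) := by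
  intro v w
  set s : Fin g → ℤ := Qβα⁻¹.mulVec (Qβγ.mulVec v) with hs
  have hskew : ∀ x y : H, ω x y = - ω y x := by
    intro x y
    have h := halt (x + y)
    simp only [map_add, LinearMap.add_apply, halt] at h
    linarith
  refine ⟨?_, ?_, ?_⟩
  · rw [hαA]
    refine Submodule.sum_mem _ fun i _ => ?_
    have h := Submodule.smul_mem (Submodule.span ℤ (Set.range α)) (s i)
      (Submodule.subset_span (Set.mem_range_self i))
    have e := Int.cast_smul_eq_zsmul ℤ (s i) (α i)
    rw [Int.cast_id] at e
    rw [← e]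
    exact h
  · rw [hB]
    intro b hb
    rw [hβB] at hb
    induction hb using Submodule.span_induction with
    | mem b hbmem =>
      obtain ⟨i, rfl⟩ := hbmem
      have key : Qβα.mulVec s = Qβγ.mulVec v := by
        rw [hs, Matrix.mulVec_mulVec, Matrix.mul_nonsing_inv _ hdet, Matrix.one_mulVec]
      have h1 : ω (β i) (∑ j, v j • γ j) = (Qβγ.mulVec v) i := by
        rw [bsum_right']
        simp [Matrix.mulVec, dotProduct, hQβγ, mul_comm]
      have h2 : ω (β i) (∑ j, s j • α j) = (Qβα.mulVec s) i := by
        rw [bsum_right']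
        simp [Matrix.mulVec, dotProduct, hQβα, mul_comm]
      rw [map_sub, h1, h2, key, sub_self]
    | zero => simp
    | add x y _ _ hx hy => rw [map_add, LinearMap.add_apply, hx, hy, add_zero]
    | smul c x _ hx => rw [LinearMap.map_smul, LinearMap.smul_apply, hx, smul_zero]
  · have hL : ω (∑ i, s i • α i) (∑ j, w j • γ j) =
        dotProduct s (Qαγ.mulVec w) := bsum_both' ω α γ Qαγ hQαγ s w
    have hQγβ' : Qγβ = -(Qβγ.transpose) := by
      ext i j
      simp [hQγβ, hQβγ, Matrix.transpose_apply, hskew (γ i) (β j)]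
    have hQαβ' : Qαβ = -(Qβα.transpose) := by
      ext i j
      simp [hQαβ, hQβα, Matrix.transpose_apply, hskew (α i) (β j)]
    have hinv : Qαβ⁻¹ = -((Qβα⁻¹).transpose) := by
      apply Matrix.inv_eq_right_inv
      rw [hQαβ', neg_mul_neg, ← Matrix.transpose_mul, Matrix.nonsing_inv_mul _ hdet,
        Matrix.transpose_one]
    have hmat : Qγβ * Qαβ⁻¹ * Qαγ = (Qβα⁻¹ * Qβγ).transpose * Qαγ := by
      rw [hQγβ', hinv, neg_mul_neg, ← Matrix.transpose_mul]
    rw [hL, hmat]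
    conv_rhs => rw [← Matrix.mulVec_mulVec, Matrix.dotProduct_mulVec,
      Matrix.vecMul_transpose]
    rw [hs, Matrix.mulVec_mulVec]
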